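/- Let m ≥ 2 and 1 ≤ k ≤ m. Take f_1 = ⋯ = f_k = χ_{(−1,1)} and f_{k+1} = ⋯ = f_m ≡ 1. Then there is a constant c > 0, depending only on m and k, such that S^m(f_1,…,f_m)(x) ≥ c |x|^{−k} for every x with |x| ≥ 2. Consequently, with p_1 = ⋯ = p_k = 1 and p_{k+1} = ⋯ = p_m = ∞ and p = 1/k, the strong-type bound ‖S^m(g_1,…,g_m)‖_{L^p(ℝ)} ≤ C Π_{i=1}^m ‖g_i‖_{L^{p_i}(ℝ)} fails for every finite constant C. -/

import Mathlib

open MeasureTheory Real Set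
open scoped ENNReal NNReal

/-- The bilinear spherical maximal function in dimension one:
`S²(f,g)(x) = sup_{t>0} (2π)⁻¹ ∫_0^{2π} |f(x - t cos θ)| |g(x - t sin θ)| dθ`. -/
noncomputable def S2 (f g : ℝ → ℝ) (x : ℝ) : ℝ≥0∞ :=
  ⨆ (t : ℝ) (_ : 0 < t),
    (ENNReal.ofReal (2 * π))⁻¹ *
      ∫⁻ θ in Set.Ioc (0 : ℝ) (2 * π),
        ENNReal.ofReal (|f (x - t * Real.cos θ)| * |g (x - t * Real.sin θ)|)

/-- The normalized surface measure on the unit sphere `S^{m-1} ⊆ ℝ^m`. -/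
noncomputable def sphMeasure (m : ℕ) :
    Measure (Metric.sphere (0 : EuclideanSpace ℝ (Fin m)) 1) :=
  ((volume : Measure (EuclideanSpace ℝ (Fin m))).toSphere Set.univ)⁻¹ •
    (volume : Measure (EuclideanSpace ℝ (Fin m))).toSphere

/-- The multilinear spherical average
`S^m_t(|f₁|,…,|f_m|)(x) = ∫_{S^{m-1}} ∏ |f_i(x - t y_i)| dσ_{m-1}(y)`. -/
noncomputable def sphAvg (m : ℕ) (f : Fin m → ℝ → ℝ) (t x : ℝ) : ℝ≥0∞ :=
  ∫⁻ y : Metric.sphere (0 : EuclideanSpace ℝ (Fin m)) 1,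
    ∏ i, ENNReal.ofReal |f i (x - t * (y : EuclideanSpace ℝ (Fin m)) i)| ∂(sphMeasure m)

/-- The multilinear spherical maximal function `S^m(f₁,…,f_m)(x) = sup_{t>0} S^m_t(|f₁|,…,|f_m|)(x)`. -/
noncomputable def Sm (m : ℕ) (f : Fin m → ℝ → ℝ) (x : ℝ) : ℝ≥0∞ :=
  ⨆ (t : ℝ) (_ : 0 < t), sphAvg m f t x

/-- The `L^p(ℝ)` norm of an `ℝ≥0∞`-valued function. -/
noncomputable def lpNorm (p : ℝ≥0∞) (F : ℝ → ℝ≥0∞) : ℝ≥0∞ :=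
  if p = ∞ then essSup F volume
  else (∫⁻ x, F x ^ p.toReal) ^ (1 / p.toReal)

/-- The weak `L^{p,∞}(ℝ)` quasinorm of an `ℝ≥0∞`-valued function. -/
noncomputable def wLpNorm (p : ℝ≥0∞) (F : ℝ → ℝ≥0∞) : ℝ≥0∞ :=
  ⨆ (l : ℝ≥0∞) (_ : 0 < l), l * (volume {x | l < F x}) ^ (1 / p.toReal)

/-- The `k`-linear Hardy–Littlewood maximal function
`M^k(g₁,…,g_k)(x) = sup_{t>0} ∫_{B^k(0,1)} ∏ |g_i(x - t y_i)| dy`. -/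
noncomputable def Mk (k : ℕ) (g : Fin k → ℝ → ℝ) (x : ℝ) : ℝ≥0∞ :=
  ⨆ (t : ℝ) (_ : 0 < t),
    ∫⁻ y in Metric.ball (0 : EuclideanSpace ℝ (Fin k)) 1,
      ∏ i, ENNReal.ofReal |g i (x - t * y i)| ∂volume

/-! ### Auxiliary definitions and lemmas -/

/-- The counterexample family: the first `k` functions are `χ_{(-1,1)}`, the rest are `1`. -/
noncomputable def fCtr (m k : ℕ) : Fin m → ℝ → ℝ := fun i =>
  if (i : ℕ) < k then Set.indicator (Set.Ioo (-1 : ℝ) 1) 1 else fun _ => 1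

lemma fCtr_meas (m k : ℕ) (i : Fin m) : Measurable (fCtr m k i) := by
  unfold fCtr
  split
  · exact measurable_const.indicator measurableSet_Ioo
  · exact measurable_const

lemma coord_abs_le_norm {m : ℕ} (z : EuclideanSpace ℝ (Fin m)) (i : Fin m) : |z i| ≤ ‖z‖ := by
  rw [EuclideanSpace.norm_eq, ← Real.sqrt_sq_eq_abs]
  apply Real.sqrt_le_sqrt
  have := Finset.single_le_sum (f := fun j => ‖z j‖ ^ 2) (fun j _ => sq_nonneg _) (Finset.mem_univ i)
  simpa [Real.norm_eq_abs, sq_abs] using this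

lemma prodMeas (m k : ℕ) (x : ℝ) :
    Measurable fun p : (Metric.sphere (0 : EuclideanSpace ℝ (Fin m)) 1) × (Set.Ioi (0:ℝ)) =>
      ∏ i, ENNReal.ofReal |fCtr m k i (x - (p.2 : ℝ) * (p.1 : EuclideanSpace ℝ (Fin m)) i)| := by
  apply Finset.measurable_prod; intro i _
  have h1 : Measurable fun p : (Metric.sphere (0 : EuclideanSpace ℝ (Fin m)) 1) × (Set.Ioi (0:ℝ)) =>
      x - (p.2 : ℝ) * (p.1 : EuclideanSpace ℝ (Fin m)) i :=
    measurable_const.sub ((measurable_subtype_coe.comp measurable_snd).mul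
      ((measurable_pi_apply i).comp (Measurable.comp (WithLp.measurable_ofLp 2 (Fin m → ℝ))
        (measurable_subtype_coe.comp measurable_fst))))
  exact ((fCtr_meas m k i).comp h1).abs.ennreal_ofReal

lemma prodMeasY (m k : ℕ) (x t : ℝ) :
    Measurable fun y : (Metric.sphere (0 : EuclideanSpace ℝ (Fin m)) 1) =>
      ∏ i, ENNReal.ofReal |fCtr m k i (x - t * (y : EuclideanSpace ℝ (Fin m)) i)| := by
  apply Finset.measurable_prod; intro i _
  have h1 : Measurable fun y : (Metric.sphere (0 : EuclideanSpace ℝ (Fin m)) 1) =>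
      x - t * (y : EuclideanSpace ℝ (Fin m)) i :=
    measurable_const.sub (measurable_const.mul
      ((measurable_pi_apply i).comp (Measurable.comp (WithLp.measurable_ofLp 2 (Fin m → ℝ)) measurable_subtype_coe)))
  exact ((fCtr_meas m k i).comp h1).abs.ennreal_ofReal

lemma sphTot_ne_zero (m : ℕ) (hm : 1 ≤ m) :
    (volume : Measure (EuclideanSpace ℝ (Fin m))).toSphere Set.univ ≠ 0 := by
  rw [Measure.toSphere_apply_univ]
  refine mul_ne_zero ?_ (Metric.measure_ball_pos _ _ one_pos).ne'
  simp [finrank_euclideanSpace_fin]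
  omega

lemma sphere_lintegral (m : ℕ) (hm : 1 ≤ m)
    (g : (Metric.sphere (0 : EuclideanSpace ℝ (Fin m)) 1) → ℝ≥0∞) :
    ∫⁻ y, g y ∂((volume : Measure (EuclideanSpace ℝ (Fin m))).toSphere) =
      ((volume : Measure (EuclideanSpace ℝ (Fin m))).toSphere Set.univ) *
        ∫⁻ y, g y ∂(sphMeasure m) := by
  rw [sphMeasure, lintegral_smul_measure, smul_eq_mul, ← mul_assoc,
    ENNReal.mul_inv_cancel (sphTot_ne_zero m hm) (measure_ne_top _ _), one_mul]

set_option maxHeartbeats 1000000 in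
lemma key (m k : ℕ) (hm : 2 ≤ m) (hk1 : 1 ≤ k) (hkm : k ≤ m) (x : ℝ) (hx : 2 ≤ |x|) :
    ENNReal.ofReal (2 ^ k * |x| ^ (m - k)) ≤
      ((volume : Measure (EuclideanSpace ℝ (Fin m))).toSphere Set.univ) *
        ENNReal.ofReal ((2 * m * |x|) ^ m) * Sm m (fCtr m k) x := by
  have hx0 : (0:ℝ) < |x| := lt_of_lt_of_le two_pos hx
  have hmR : (1:ℝ) ≤ (m:ℝ) := by exact_mod_cast Nat.one_le_cast.mpr (by omega)
  set a : ℝ := |x| - 1 with haa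
  set b : ℝ := 2 * m * |x| with hbb
  have ha1 : (1:ℝ) ≤ a := by rw [haa]; linarith
  have hb0 : (0:ℝ) < b := by rw [hbb]; nlinarith
  set σ' : Measure (Metric.sphere (0 : EuclideanSpace ℝ (Fin m)) 1) :=
    (volume : Measure (EuclideanSpace ℝ (Fin m))).toSphere with hσ'
  set I : Fin m → Set ℝ := fun i => if (i:ℕ) < k then Ioo (x-1) (x+1) else Ioo 0 |x| with hI
  have hIm : ∀ i, MeasurableSet (I i) := by
    intro i; rw [hI]; dsimp only; split <;> exact measurableSet_Ioo
  set B : Set (EuclideanSpace ℝ (Fin m)) := {z | ∀ i, z i ∈ I i} with hBdef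
  have hBpi : B = ((MeasurableEquiv.toLp 2 (Fin m → ℝ)).symm) ⁻¹' (Set.univ.pi I) := by
    ext z
    simp [hBdef, Set.mem_pi]
  have hB : MeasurableSet B := by
    rw [hBpi]
    exact ((MeasurableEquiv.toLp 2 (Fin m → ℝ)).symm).measurable (MeasurableSet.univ_pi fun i => hIm i)
  -- volume of the box
  have hvolB : volume B = ENNReal.ofReal (2 ^ k * |x| ^ (m - k)) := by
    rw [hBpi, (EuclideanSpace.volume_preserving_symm_measurableEquiv_toLp (Fin m)).measure_preimage
      (MeasurableSet.univ_pi fun i => hIm i).nullMeasurableSet, volume_pi_pi]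
    have h1 : ∀ i : Fin m, volume (I i) =
        if (i:ℕ) < k then ENNReal.ofReal 2 else ENNReal.ofReal |x| := by
      intro i; rw [hI]; dsimp only; split
      · rw [Real.volume_Ioo]; norm_num
      · rw [Real.volume_Ioo]; norm_num
    calc ∏ i : Fin m, volume (I i)
        = ∏ i ∈ Finset.range m, (if i < k then ENNReal.ofReal 2 else ENNReal.ofReal |x|) := by
          rw [← Fin.prod_univ_eq_prod_range
            (fun i => if i < k then ENNReal.ofReal 2 else ENNReal.ofReal |x|) m]
          exact Finset.prod_congr rfl fun i _ => h1 i
      _ = (∏ i ∈ Finset.range k, (if i < k then ENNReal.ofReal 2 else ENNReal.ofReal |x|)) *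
          ∏ i ∈ Finset.Ico k m, (if i < k then ENNReal.ofReal 2 else ENNReal.ofReal |x|) := by
          rw [Finset.prod_range_mul_prod_Ico _ hkm]
      _ = ENNReal.ofReal 2 ^ k * ENNReal.ofReal |x| ^ (m - k) := by
          rw [Finset.prod_congr rfl (fun i hi => if_pos (Finset.mem_range.1 hi)),
            Finset.prod_congr rfl (fun i hi => if_neg (Nat.not_lt.2 (Finset.mem_Ico.1 hi).1)),
            Finset.prod_const, Finset.prod_const, Finset.card_range, Nat.card_Ico]
      _ = ENNReal.ofReal (2 ^ k * |x| ^ (m - k)) := by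
          rw [← ENNReal.ofReal_pow (by norm_num), ← ENNReal.ofReal_pow (abs_nonneg x),
            ← ENNReal.ofReal_mul (by positivity)]
  -- measure preserving polar decomposition
  have hMP := (volume : Measure (EuclideanSpace ℝ (Fin m))).measurePreserving_homeomorphUnitSphereProd
  rw [show Module.finrank ℝ (EuclideanSpace ℝ (Fin m)) = m from finrank_euclideanSpace_fin] at hMP
  set G : (Metric.sphere (0 : EuclideanSpace ℝ (Fin m)) 1) × (Set.Ioi (0:ℝ)) → ℝ≥0∞ :=
    fun p => B.indicator (fun _ => (1:ℝ≥0∞)) ((p.2 : ℝ) • (p.1 : EuclideanSpace ℝ (Fin m))) with hG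
  have hsmul : Measurable fun p : (Metric.sphere (0 : EuclideanSpace ℝ (Fin m)) 1) × (Set.Ioi (0:ℝ)) =>
      ((p.2 : ℝ) • (p.1 : EuclideanSpace ℝ (Fin m)) : EuclideanSpace ℝ (Fin m)) :=
    ((continuous_subtype_val.comp continuous_snd).smul
      (continuous_subtype_val.comp continuous_fst)).measurable
  have hGmeas : Measurable G := (measurable_const.indicator hB).comp hsmul
  have hB0 : B ⊆ {(0 : EuclideanSpace ℝ (Fin m))}ᶜ := by
    intro z hz
    have hzi : z ⟨0, by omega⟩ ∈ I ⟨0, by omega⟩ := hz _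
    rw [hI] at hzi
    simp only [if_pos (by show 0 < k; omega : ((⟨0, by omega⟩ : Fin m) : ℕ) < k)] at hzi
    intro h0
    rw [Set.mem_singleton_iff] at h0
    subst h0
    have : (0 : EuclideanSpace ℝ (Fin m)) ⟨0, by omega⟩ = 0 := rfl
    rw [this, Set.mem_Ioo] at hzi
    have hlt : |x| < 1 := abs_lt.2 ⟨by linarith [hzi.1], by linarith [hzi.2]⟩
    linarith
  have hGint : ∫⁻ p, G p ∂(σ'.prod (Measure.volumeIoiPow (m-1))) = volume B := by
    rw [← hMP.lintegral_comp hGmeas]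
    have hcongr : ∀ z : ({(0:EuclideanSpace ℝ (Fin m))}ᶜ : Set _),
        G (homeomorphUnitSphereProd _ z) = B.indicator (fun _ => (1:ℝ≥0∞)) (z : EuclideanSpace ℝ (Fin m)) := by
      intro z
      rw [hG]
      simp only [homeomorphUnitSphereProd_apply_snd_coe, homeomorphUnitSphereProd_apply_fst_coe]
      rw [smul_smul, mul_inv_cancel₀ (norm_ne_zero_iff.2 z.2), one_smul]
    rw [lintegral_congr hcongr, lintegral_subtype_comap (measurableSet_singleton _).compl,
      lintegral_indicator hB, setLIntegral_one, Measure.restrict_apply hB,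
      Set.inter_eq_self_of_subset_left hB0]
  -- pointwise bound
  set Φ : (Metric.sphere (0 : EuclideanSpace ℝ (Fin m)) 1) → (Set.Ioi (0:ℝ)) → ℝ≥0∞ :=
    fun y r => (Set.Ioo a b).indicator (fun _ => (1:ℝ≥0∞)) (r : ℝ) *
      ∏ i, ENNReal.ofReal |fCtr m k i (x - (r : ℝ) * (y : EuclideanSpace ℝ (Fin m)) i)| with hΦ
  have hpt : ∀ (y : Metric.sphere (0 : EuclideanSpace ℝ (Fin m)) 1) (r : Set.Ioi (0:ℝ)),
      G (y, r) ≤ Φ y r := by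
    intro y r
    by_cases hzB : ((r : ℝ) • (y : EuclideanSpace ℝ (Fin m))) ∈ B
    · set z : EuclideanSpace ℝ (Fin m) := (r : ℝ) • (y : EuclideanSpace ℝ (Fin m)) with hz
      have hr0 : (0:ℝ) < r := r.2
      have hzc : ∀ i, z i = (r : ℝ) * (y : EuclideanSpace ℝ (Fin m)) i := fun i => rfl
      have hnz : ‖z‖ = (r : ℝ) := by
        rw [hz, norm_smul, mem_sphere_zero_iff_norm.1 y.2, mul_one, Real.norm_eq_abs,
          abs_of_pos hr0]
      -- each coordinate bounded
      have hco : ∀ i, |z i| ≤ |x| + 1 := by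
        intro i
        have hzi := hzB i
        rw [hI] at hzi
        dsimp only at hzi
        by_cases hik : (i:ℕ) < k
        · rw [if_pos hik, Set.mem_Ioo] at hzi
          exact abs_le.2 ⟨by linarith [neg_abs_le x, hzi.1], by linarith [le_abs_self x, hzi.2]⟩
        · rw [if_neg hik, Set.mem_Ioo] at hzi
          exact abs_le.2 ⟨by linarith [hzi.1], by linarith [hzi.2]⟩
      -- r ∈ Ioo a b
      have hrI : (r : ℝ) ∈ Set.Ioo a b := by
        constructor
        · -- a < r via first coordinate
          have hi0k : ((⟨0, by omega⟩ : Fin m) : ℕ) < k := by show 0 < k; omega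
          have hzi := hzB ⟨0, by omega⟩
          rw [hI] at hzi
          dsimp only at hzi
          rw [if_pos hi0k, Set.mem_Ioo] at hzi
          have habs : a < |z ⟨0, by omega⟩| := by
            rcases le_or_gt 0 x with hxp | hxn
            · have hax : |x| = x := abs_of_nonneg hxp
              calc a = x - 1 := by rw [haa, hax]
                _ < z ⟨0, by omega⟩ := hzi.1
                _ ≤ |z ⟨0, by omega⟩| := le_abs_self _
            · have hax : |x| = -x := abs_of_neg hxn
              calc a = -(x + 1) := by rw [haa, hax]; ring
                _ < -(z ⟨0, by omega⟩) := by linarith [hzi.2]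
                _ ≤ |z ⟨0, by omega⟩| := neg_le_abs _
          calc a < |z ⟨0, by omega⟩| := habs
            _ ≤ ‖z‖ := coord_abs_le_norm z _
            _ = (r : ℝ) := hnz
        · -- r < b
          have hsum : ∑ i, ‖z i‖ ^ 2 ≤ (m:ℝ) * (|x| + 1) ^ 2 := by
            calc ∑ i, ‖z i‖ ^ 2 ≤ ∑ _i : Fin m, (|x| + 1) ^ 2 :=
                Finset.sum_le_sum fun i _ => by
                  rw [Real.norm_eq_abs]
                  exact pow_le_pow_left₀ (abs_nonneg _) (hco i) 2
              _ = (m:ℝ) * (|x| + 1) ^ 2 := by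
                  rw [Finset.sum_const, Finset.card_univ, Fintype.card_fin, nsmul_eq_mul]
          have hnle : ‖z‖ ≤ Real.sqrt ((m:ℝ) * (|x| + 1) ^ 2) := by
            rw [EuclideanSpace.norm_eq]
            exact Real.sqrt_le_sqrt hsum
          have hsq : Real.sqrt ((m:ℝ) * (|x| + 1) ^ 2) = Real.sqrt (m:ℝ) * (|x| + 1) := by
            rw [Real.sqrt_mul (by positivity), Real.sqrt_sq (by positivity)]
          have hsm : Real.sqrt (m:ℝ) ≤ (m:ℝ) := by
            calc Real.sqrt (m:ℝ) ≤ Real.sqrt ((m:ℝ) ^ 2) := Real.sqrt_le_sqrt (by nlinarith)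
              _ = (m:ℝ) := Real.sqrt_sq (by positivity)
          have : ‖z‖ < b := by
            rw [hbb]
            have hs0 : (0:ℝ) ≤ Real.sqrt (m:ℝ) := Real.sqrt_nonneg _
            nlinarith [hnle, hsq, hsm, hx0, hmR]
          rw [← hnz]; exact this
      -- conclude
      rw [hG]
      dsimp only
      rw [Set.indicator_of_mem hzB, hΦ]
      dsimp only
      rw [Set.indicator_of_mem hrI]
      rw [one_mul]
      rw [Finset.prod_eq_one]
      intro i _
      by_cases hik : (i:ℕ) < k
      · have hzi := hzB i
        rw [hI] at hzi
        dsimp only at hzi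
        rw [if_pos hik, Set.mem_Ioo] at hzi
        have harg : x - (r : ℝ) * (y : EuclideanSpace ℝ (Fin m)) i ∈ Set.Ioo (-1:ℝ) 1 := by
          rw [← hzc i] at *
          constructor <;> [linarith [hzi.2]; linarith [hzi.1]]
        rw [show fCtr m k i = Set.indicator (Set.Ioo (-1 : ℝ) 1) 1 from by
          unfold fCtr; rw [if_pos hik]]
        rw [Set.indicator_of_mem harg]
        norm_num
      · rw [show fCtr m k i = fun _ => (1:ℝ) from by unfold fCtr; rw [if_neg hik]]
        norm_num
    · rw [hG]
      dsimp only
      rw [Set.indicator_of_notMem hzB]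
      exact zero_le
  -- uncurried measurability of Φ
  have hΦmeas : Measurable (Function.uncurry Φ) := by
    apply Measurable.mul
    · exact (measurable_const.indicator measurableSet_Ioo).comp
        (measurable_subtype_coe.comp measurable_snd)
    · exact prodMeas m k x
  have hSfin : ∀ r : Set.Ioi (0:ℝ), sphAvg m (fCtr m k) (r : ℝ) x ≤ Sm m (fCtr m k) x := by
    intro r
    exact le_iSup₂ (f := fun t (_ : 0 < t) => sphAvg m (fCtr m k) t x) (r : ℝ) r.2
  set D : ℝ≥0∞ := σ' Set.univ * Sm m (fCtr m k) x with hD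
  calc ENNReal.ofReal (2 ^ k * |x| ^ (m - k)) = volume B := hvolB.symm
    _ = ∫⁻ p, G p ∂(σ'.prod (Measure.volumeIoiPow (m-1))) := hGint.symm
    _ = ∫⁻ y, ∫⁻ r, G (y, r) ∂(Measure.volumeIoiPow (m-1)) ∂σ' :=
        lintegral_prod G hGmeas.aemeasurable
    _ ≤ ∫⁻ y, ∫⁻ r, Φ y r ∂(Measure.volumeIoiPow (m-1)) ∂σ' :=
        lintegral_mono fun y => lintegral_mono fun r => hpt y r
    _ = ∫⁻ r, ∫⁻ y, Φ y r ∂σ' ∂(Measure.volumeIoiPow (m-1)) :=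
        lintegral_lintegral_swap hΦmeas.aemeasurable
    _ ≤ ∫⁻ r, (Set.Ioo a b).indicator (fun _ => D) (r : ℝ) ∂(Measure.volumeIoiPow (m-1)) := by
        refine lintegral_mono fun r => ?_
        rw [hΦ]
        dsimp only
        rw [lintegral_const_mul _ (prodMeasY m k x (r : ℝ))]
        by_cases hr : (r : ℝ) ∈ Set.Ioo a b
        · rw [Set.indicator_of_mem hr, Set.indicator_of_mem hr, one_mul]
          have := sphere_lintegral m (by omega)
            (fun y => ∏ i, ENNReal.ofReal |fCtr m k i (x - (r : ℝ) * (y : EuclideanSpace ℝ (Fin m)) i)|)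
          rw [← hσ'] at this
          rw [this]
          rw [hD]
          exact mul_le_mul_right (hSfin r) _
        · rw [Set.indicator_of_notMem hr, Set.indicator_of_notMem hr, zero_mul]
    _ = ∫⁻ t in Set.Ioi (0:ℝ), ENNReal.ofReal (t ^ (m-1)) *
          (Set.Ioo a b).indicator (fun _ => D) t := by
        have hdens : Measurable fun r : Set.Ioi (0:ℝ) => ENNReal.ofReal ((r : ℝ) ^ (m-1)) :=
          (measurable_subtype_coe.pow_const _).ennreal_ofReal
        have hind : Measurable fun r : Set.Ioi (0:ℝ) =>
            (Set.Ioo a b).indicator (fun _ => D) (r : ℝ) :=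
          (measurable_const.indicator measurableSet_Ioo).comp measurable_subtype_coe
        rw [Measure.volumeIoiPow, lintegral_withDensity_eq_lintegral_mul _ hdens hind]
        exact lintegral_subtype_comap measurableSet_Ioi
          (fun t => ENNReal.ofReal (t ^ (m-1)) * (Set.Ioo a b).indicator (fun _ => D) t)
    _ ≤ ∫⁻ t in Set.Ioi (0:ℝ),
          (Set.Ioo a b).indicator (fun _ => ENNReal.ofReal (b ^ (m-1)) * D) t := by
        refine lintegral_mono fun t => ?_
        by_cases ht : t ∈ Set.Ioo a b
        · rw [Set.indicator_of_mem ht, Set.indicator_of_mem ht]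
          refine mul_le_mul_left (ENNReal.ofReal_le_ofReal ?_) _
          exact pow_le_pow_left₀ (by linarith [ht.1]) ht.2.le _
        · rw [Set.indicator_of_notMem ht, Set.indicator_of_notMem ht, mul_zero]
    _ = (ENNReal.ofReal (b ^ (m-1)) * D) * volume (Set.Ioo a b ∩ Set.Ioi 0) := by
        rw [lintegral_indicator measurableSet_Ioo, setLIntegral_const,
          Measure.restrict_apply measurableSet_Ioo]
    _ ≤ (ENNReal.ofReal (b ^ (m-1)) * D) * ENNReal.ofReal b := by
        refine mul_le_mul_right ?_ _
        calc volume (Set.Ioo a b ∩ Set.Ioi 0) ≤ volume (Set.Ioo a b) :=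
            measure_mono Set.inter_subset_left
          _ = ENNReal.ofReal (b - a) := Real.volume_Ioo
          _ ≤ ENNReal.ofReal b := ENNReal.ofReal_le_ofReal (by linarith)
    _ ≤ σ' Set.univ * ENNReal.ofReal ((2 * m * |x|) ^ m) * Sm m (fCtr m k) x := by
        rw [hD]
        have hb' : ENNReal.ofReal (b ^ (m-1)) * ENNReal.ofReal b ≤ ENNReal.ofReal ((2 * m * |x|) ^ m) := by
          rw [← ENNReal.ofReal_mul (by positivity), ← pow_succ,
            show m - 1 + 1 = m from by omega, ← hbb]
        calc ENNReal.ofReal (b ^ (m-1)) * (σ' Set.univ * Sm m (fCtr m k) x) * ENNReal.ofReal b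
            = (ENNReal.ofReal (b ^ (m-1)) * ENNReal.ofReal b) * (σ' Set.univ * Sm m (fCtr m k) x) := by
              ring
          _ ≤ ENNReal.ofReal ((2 * m * |x|) ^ m) * (σ' Set.univ * Sm m (fCtr m k) x) :=
              mul_le_mul_left hb' _
          _ = σ' Set.univ * ENNReal.ofReal ((2 * m * |x|) ^ m) * Sm m (fCtr m k) x := by
              ring

lemma lowerBound (m k : ℕ) (hm : 2 ≤ m) (hk1 : 1 ≤ k) (hkm : k ≤ m) :
    ∃ c : ℝ, 0 < c ∧ ∀ x : ℝ, 2 ≤ |x| →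
      ENNReal.ofReal (c * |x| ^ (-(k : ℝ))) ≤ Sm m (fCtr m k) x := by
  set σT : ℝ := ((volume : Measure (EuclideanSpace ℝ (Fin m))).toSphere Set.univ).toReal with hσT
  have hσTpos : 0 < σT :=
    ENNReal.toReal_pos (sphTot_ne_zero m (by omega)) (measure_ne_top _ _)
  have hm0 : (0:ℝ) < (m:ℝ) := by exact_mod_cast (by omega : 0 < m)
  have hpow : (0:ℝ) < (2*(m:ℝ))^m := pow_pos (by linarith) m
  refine ⟨2^k / (σT * (2*(m:ℝ))^m), div_pos (by positivity) (mul_pos hσTpos hpow), ?_⟩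
  intro x hx
  have hx0 : (0:ℝ) < |x| := lt_of_lt_of_le two_pos hx
  have hkey := key m k hm hk1 hkm x hx
  set A : ℝ≥0∞ := ((volume : Measure (EuclideanSpace ℝ (Fin m))).toSphere Set.univ) *
    ENNReal.ofReal ((2*(m:ℝ)*|x|)^m) with hA
  have hA0 : A ≠ 0 := by
    rw [hA]
    exact mul_ne_zero (sphTot_ne_zero m (by omega))
      (ENNReal.ofReal_pos.2 (by positivity)).ne'
  have hAtop : A ≠ ∞ := by
    rw [hA]
    exact ENNReal.mul_ne_top (measure_ne_top _ _) ENNReal.ofReal_ne_top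
  -- the main real-number computation
  have hreal : (2^k / (σT * (2*(m:ℝ))^m)) * |x| ^ (-(k:ℝ)) * (σT * (2*(m:ℝ)*|x|)^m)
      = 2^k * |x| ^ (m - k) := by
    have hrp : |x| ^ (-(k:ℝ)) = (|x|^k)⁻¹ := by
      rw [Real.rpow_neg (abs_nonneg x), Real.rpow_natCast]
    have hxm : |x|^m = |x|^(m-k) * |x|^k := by
      rw [← pow_add, Nat.sub_add_cancel hkm]
    rw [hrp, mul_pow (2*(m:ℝ)) |x| m, hxm]
    have hxk : (0:ℝ) < |x|^k := pow_pos hx0 k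
    field_simp
  -- transfer to ℝ≥0∞
  have hofreal : ENNReal.ofReal ((2^k / (σT * (2*(m:ℝ))^m)) * |x| ^ (-(k:ℝ))) * A
      = ENNReal.ofReal (2^k * |x| ^ (m - k)) := by
    rw [hA, show ((volume : Measure (EuclideanSpace ℝ (Fin m))).toSphere Set.univ)
        = ENNReal.ofReal σT from (ENNReal.ofReal_toReal (measure_ne_top _ _)).symm,
      ← ENNReal.ofReal_mul (by positivity), ← ENNReal.ofReal_mul
        (by positivity), ← hreal]
  rw [← ENNReal.mul_le_mul_iff_left hA0 hAtop, hofreal]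
  calc ENNReal.ofReal (2^k * |x| ^ (m - k)) ≤ A * Sm m (fCtr m k) x := hkey
    _ = Sm m (fCtr m k) x * A := mul_comm _ _

lemma lint_inv_top (c' : ℝ) (hc : 0 < c') :
    ∫⁻ t in Set.Ioi (2:ℝ), ENNReal.ofReal (c' * t⁻¹) = ∞ := by
  by_contra h
  have hmeas : Measurable fun t : ℝ => c' * t⁻¹ := measurable_const.mul measurable_inv
  have hint : IntegrableOn (fun t : ℝ => c' * t⁻¹) (Set.Ioi 2) volume := by
    refine ⟨hmeas.aestronglyMeasurable, ?_⟩
    have heq : ∀ t ∈ Set.Ioi (2:ℝ), ‖c' * t⁻¹‖ₑ = ENNReal.ofReal (c' * t⁻¹) := by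
      intro t ht
      rw [Set.mem_Ioi] at ht
      exact Real.enorm_eq_ofReal (mul_nonneg hc.le (inv_nonneg.2 (by linarith)))
    have : (∫⁻ t in Set.Ioi (2:ℝ), ‖c' * t⁻¹‖ₑ) =
        ∫⁻ t in Set.Ioi (2:ℝ), ENNReal.ofReal (c' * t⁻¹) :=
      setLIntegral_congr_fun measurableSet_Ioi heq
    rw [HasFiniteIntegral, this]
    exact lt_top_iff_ne_top.2 h
  have h2 : IntegrableOn (fun t : ℝ => t ^ (-1:ℝ)) (Set.Ioi 2) volume := by
    have h3 : IntegrableOn (fun t : ℝ => c'⁻¹ * (c' * t⁻¹)) (Set.Ioi 2) volume :=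
      hint.const_mul (c'⁻¹)
    refine IntegrableOn.congr_fun h3 ?_ measurableSet_Ioi
    intro t ht
    simp only [Real.rpow_neg_one]
    field_simp
  rw [integrableOn_Ioi_rpow_iff two_pos] at h2
  linarith

lemma lp_top (m k : ℕ) (hm : 2 ≤ m) (hk1 : 1 ≤ k) (hkm : k ≤ m) :
    lpNorm ((k : ℝ≥0∞))⁻¹ (Sm m (fCtr m k)) = ∞ := by
  obtain ⟨c, hc, hlow⟩ := lowerBound m k hm hk1 hkm
  have hkR : (0:ℝ) < (k:ℝ) := by exact_mod_cast (by omega : 0 < k)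
  have hpne : ((k : ℝ≥0∞))⁻¹ ≠ ∞ := by
    rw [Ne, ENNReal.inv_eq_top]
    exact_mod_cast Nat.cast_ne_zero.2 (by omega)
  rw [_root_.lpNorm, if_neg hpne]
  have htr : ((k : ℝ≥0∞))⁻¹.toReal = (k:ℝ)⁻¹ := by
    rw [ENNReal.toReal_inv]
    norm_num
  rw [htr]
  have hint : ∫⁻ x, Sm m (fCtr m k) x ^ ((k:ℝ)⁻¹) = ∞ := by
    rw [eq_top_iff]
    calc (⊤:ℝ≥0∞) = ∫⁻ t in Set.Ioi (2:ℝ), ENNReal.ofReal (c ^ ((k:ℝ)⁻¹) * t⁻¹) :=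
          (lint_inv_top _ (Real.rpow_pos_of_pos hc _)).symm
      _ ≤ ∫⁻ t in Set.Ioi (2:ℝ), Sm m (fCtr m k) t ^ ((k:ℝ)⁻¹) := by
          refine setLIntegral_mono' measurableSet_Ioi fun t ht => ?_
          rw [Set.mem_Ioi] at ht
          have htpos : (0:ℝ) < t := by linarith
          have hta : |t| = t := abs_of_pos htpos
          have ht2 : (2:ℝ) ≤ |t| := by rw [hta]; linarith
          have h1 := hlow t ht2
          have hrpos : (0:ℝ) < |t| ^ (-(k:ℝ)) := Real.rpow_pos_of_pos (by linarith [hta]) _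
          have h2 : ENNReal.ofReal (c * |t| ^ (-(k:ℝ))) ^ ((k:ℝ)⁻¹) ≤
              Sm m (fCtr m k) t ^ ((k:ℝ)⁻¹) :=
            ENNReal.rpow_le_rpow h1 (by positivity)
          refine le_trans (le_of_eq ?_) h2
          rw [ENNReal.ofReal_rpow_of_pos (mul_pos hc hrpos)]
          congr 1
          rw [Real.mul_rpow hc.le hrpos.le, ← Real.rpow_mul (abs_nonneg t),
            neg_mul, mul_inv_cancel₀ hkR.ne', Real.rpow_neg_one, hta]
      _ ≤ ∫⁻ x, Sm m (fCtr m k) x ^ ((k:ℝ)⁻¹) := setLIntegral_le_lintegral _ _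
  rw [hint, one_div, inv_inv]
  exact ENNReal.top_rpow_of_pos hkR

/-- with `f₁ = ⋯ = f_k = χ_{(-1,1)}` and `f_{k+1} = ⋯ = f_m ≡ 1`, one has
`S^m(f₁,…,f_m)(x) ≳ |x|^{-k}` for `|x| ≥ 2`; consequently, for `p₁ = ⋯ = p_k = 1`,
`p_{k+1} = ⋯ = p_m = ∞` and `p = 1/k`, the strong-type bound fails for every finite `C`. -/
theorem characteristic_counterexample_c (m k : ℕ) (hm : 2 ≤ m) (hk1 : 1 ≤ k) (hkm : k ≤ m) :
    let f : Fin m → ℝ → ℝ := fun i =>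
      if (i : ℕ) < k then Set.indicator (Set.Ioo (-1 : ℝ) 1) 1 else fun _ => 1
    let p : Fin m → ℝ≥0∞ := fun i => if (i : ℕ) < k then 1 else ∞
    (∃ c : ℝ, 0 < c ∧ ∀ x : ℝ, 2 ≤ |x| →
        ENNReal.ofReal (c * |x| ^ (-(k : ℝ))) ≤ Sm m f x) ∧
      ∀ C : ℝ≥0∞, C ≠ ∞ →
        ¬ ∀ g : Fin m → ℝ → ℝ, (∀ i, MemLp (g i) (p i) volume) →
            lpNorm ((k : ℝ≥0∞))⁻¹ (Sm m g) ≤ C * ∏ i, eLpNorm (g i) (p i) volume := by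
  intro f p
  constructor
  · exact lowerBound m k hm hk1 hkm
  · intro C hC h
    have hmem : ∀ i, MemLp (f i) (p i) volume := by
      intro i
      show MemLp (if (i:ℕ) < k then Set.indicator (Set.Ioo (-1:ℝ) 1) 1 else fun _ => (1:ℝ))
        (if (i:ℕ) < k then (1:ℝ≥0∞) else ∞) volume
      by_cases hik : (i:ℕ) < k
      · rw [if_pos hik, if_pos hik, memLp_one_iff_integrable,
          integrable_indicator_iff measurableSet_Ioo]
        refine integrableOn_const ?_
        rw [Real.volume_Ioo]
        exact ENNReal.ofReal_ne_top
      · rw [if_neg hik, if_neg hik]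
        exact memLp_top_const 1
    have hh := h f hmem
    have hlp : lpNorm ((k : ℝ≥0∞))⁻¹ (Sm m f) = ∞ := lp_top m k hm hk1 hkm
    rw [hlp, top_le_iff] at hh
    have hne : (C * ∏ i, eLpNorm (f i) (p i) volume) ≠ ⊤ := by
      apply ENNReal.mul_ne_top hC
      exact (ENNReal.prod_lt_top (fun i _ => (hmem i).2)).ne
    exact hne hh
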